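/- Every \alpha \in \Delta_0^+ satisfies exactly one of the following three conditions: (a) \alpha \in \Delta_0'^+, i.e. the coordinates of \alpha at 0 and 2n both vanish; (b) \alpha + \sigma(\alpha) \in \mathbb{Z}_{>0}\cdot\delta; (c) there exists \beta \in \Delta_0' with \sigma(\beta) \ne \beta such that \alpha + \sigma(\alpha) = \delta + \beta + \sigma(\beta). -/

import Mathlib

/-!
Statement 5: For the affine root system of type `D_{2n}^{(1)}` (`n ≥ 2`) with the
admissible diagram automorphism `σ : α_i ↦ α_{2n-i}`, every `α ∈ Δ₀⁺` satisfies
exactly one of: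
(a) `α ∈ Δ₀'⁺` (coordinates at `0` and `2n` vanish);
(b) `α + σ(α) ∈ ℤ_{>0}·δ`;
(c) `∃ β ∈ Δ₀'` with `σ(β) ≠ β` and `α + σ(α) = δ + β + σ(β)`.
-/

namespace Stmt5

/-- The root lattice `Q = ⨁_{i ∈ I} ℤ α_i` for `I = {0,1,…,2n}`. -/
abbrev Q (n : ℕ) := Fin (2 * n + 1) → ℤ

/-- The edges of the Dynkin diagram of affine type `D_{2n}^{(1)}`. -/
abbrev edge (n i j : ℕ) : Prop :=
  (i + 1 = j ∧ 2 ≤ i ∧ j ≤ 2 * n - 1) ∨ (j + 1 = i ∧ 2 ≤ j ∧ i ≤ 2 * n - 1) ∨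
  (i = 0 ∧ j = 2) ∨ (i = 2 ∧ j = 0) ∨ (i = 1 ∧ j = 2) ∨ (i = 2 ∧ j = 1) ∨
  (i = 2 * n - 2 ∧ j = 2 * n) ∨ (i = 2 * n ∧ j = 2 * n - 2)

/-- The generalized Cartan matrix of type `D_{2n}^{(1)}`. -/
def CM (n : ℕ) (i j : Fin (2 * n + 1)) : ℤ :=
  if i = j then 2 else if edge n (i : ℕ) (j : ℕ) then -1 else 0

/-- The symmetric bilinear form `B` on `Q` determined by the Cartan matrix. -/
def B (n : ℕ) (v w : Q n) : ℤ := ∑ i, ∑ j, v i * CM n i j * w j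

/-- The set of positive real roots. -/
def ΔrePos (n : ℕ) : Set (Q n) := {v | (∀ i, 0 ≤ v i) ∧ B n v v = 2}

/-- The set `Δ₀⁺` of positive roots of the finite root system of type `D_{2n}`. -/
def Δ0Pos (n : ℕ) : Set (Q n) := {v | v ∈ ΔrePos n ∧ v 0 = 0}

/-- The primitive null root `δ`. -/
def δ (n : ℕ) : Q n := fun i =>
  if (i : ℕ) = 0 ∨ (i : ℕ) = 1 ∨ (i : ℕ) = 2 * n - 1 ∨ (i : ℕ) = 2 * n then 1 else 2

/-- The admissible diagram automorphism `σ : α_i ↦ α_{2n-i}` (on coordinates). -/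
def σmap (n : ℕ) (v : Q n) : Q n := fun i => v ⟨2 * n - (i : ℕ), by omega⟩

/-- The `σ`-stable subsystem `Δ₀'` of type `A_{2n-1}` supported on `I ∖ {0, 2n}`. -/
def Δ0' (n : ℕ) : Set (Q n) :=
  {v | B n v v = 2 ∧ v 0 = 0 ∧ v ⟨2 * n, by omega⟩ = 0}

/-- The positive part `Δ₀'⁺ = Δ₀' ∩ ℕ^I`. -/
def Δ0'Pos (n : ℕ) : Set (Q n) := {v | v ∈ Δ0' n ∧ ∀ i, 0 ≤ v i}
lemma ite_or_disj (P Q : Prop) [Decidable P] [Decidable Q] (h : ¬(P ∧ Q)) (x : ℤ) :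
    (if P ∨ Q then x else 0) = (if P then x else 0) + (if Q then x else 0) := by
  by_cases hP : P <;> by_cases hQ : Q <;> simp [hP, hQ] <;> tauto

lemma edge_split (n : ℕ) (hn : 2 ≤ n) (i j : ℕ) (hi : i ≤ 2*n) (hj : j ≤ 2*n) (x : ℤ) :
    (if edge n i j then x else 0) =
      (if i + 1 = j ∧ 2 ≤ i ∧ j ≤ 2*n-1 then x else 0)
    + ((if j + 1 = i ∧ 2 ≤ j ∧ i ≤ 2*n-1 then x else 0)
    + ((if i = 0 ∧ j = 2 then x else 0) + ((if i = 2 ∧ j = 0 then x else 0)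
    + ((if i = 1 ∧ j = 2 then x else 0) + ((if i = 2 ∧ j = 1 then x else 0)
    + ((if i = 2*n-2 ∧ j = 2*n then x else 0) + (if i = 2*n ∧ j = 2*n-2 then x else 0))))))) := by
  unfold edge
  rw [ite_or_disj _ _ (by omega), ite_or_disj _ _ (by omega), ite_or_disj _ _ (by omega),
    ite_or_disj _ _ (by omega), ite_or_disj _ _ (by omega), ite_or_disj _ _ (by omega),
    ite_or_disj _ _ (by omega)]
/-- ℕ-indexed coordinates of a vector, zero out of range. -/
def ev (n : ℕ) (v : Q n) : ℕ → ℤ := fun k => if h : k < 2*n+1 then v ⟨k, h⟩ else 0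

lemma ev_coe (n : ℕ) (v : Q n) (k : Fin (2*n+1)) : ev n v (k : ℕ) = v k := by
  rw [ev, dif_pos k.isLt, Fin.eta]

lemma ev_apply (n : ℕ) (v : Q n) (k : ℕ) (h : k < 2*n+1) : ev n v k = v ⟨k, h⟩ := dif_pos h

open Finset in
lemma sum_ite_shift (f : ℕ → ℤ) (a m : ℕ) :
    ∑ k ∈ range (m+a), (if a ≤ k then f k else 0) = ∑ k ∈ range m, f (k+a) := by
  induction m with
  | zero =>
    simp only [Nat.zero_add, range_zero, sum_empty]
    apply Finset.sum_eq_zero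
    intro k hk
    rw [if_neg]
    simp only [mem_range] at hk
    omega
  | succ m ih =>
    rw [show m+1+a = (m+a)+1 by ring, sum_range_succ, sum_range_succ, ih,
      if_pos (by omega)]

open Finset in
lemma double_point (n : ℕ) (f : ℕ → ℕ → ℤ) (a b : ℕ) (ha : a < 2*n+1) (hb : b < 2*n+1) :
    (∑ i : Fin (2*n+1), ∑ j : Fin (2*n+1),
        if (i:ℕ) = a ∧ (j:ℕ) = b then f (i:ℕ) (j:ℕ) else 0) = f a b := by
  rw [Finset.sum_eq_single (⟨a, ha⟩ : Fin (2*n+1))]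
  · rw [Finset.sum_eq_single (⟨b, hb⟩ : Fin (2*n+1))]
    · rw [if_pos ⟨rfl, rfl⟩]
    · intro j _ hj; rw [if_neg]; rintro ⟨-, h2⟩; exact hj (Fin.ext h2)
    · intro h; exact absurd (Finset.mem_univ _) h
  · intro i _ hi; apply Finset.sum_eq_zero; intro j _; rw [if_neg]
    rintro ⟨h1, -⟩; exact hi (Fin.ext h1)
  · intro h; exact absurd (Finset.mem_univ _) h

open Finset in
lemma double_chain (n : ℕ) (hn : 2 ≤ n) (f : ℕ → ℕ → ℤ) :
    (∑ i : Fin (2*n+1), ∑ j : Fin (2*n+1),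
        if (i:ℕ) + 1 = (j:ℕ) ∧ 2 ≤ (i:ℕ) ∧ (j:ℕ) ≤ 2*n-1 then f (i:ℕ) (j:ℕ) else 0)
      = ∑ k ∈ range (2*n-3), f (k+2) (k+3) := by
  have inner : ∀ i : Fin (2*n+1),
      (∑ j : Fin (2*n+1), if (i:ℕ) + 1 = (j:ℕ) ∧ 2 ≤ (i:ℕ) ∧ (j:ℕ) ≤ 2*n-1
          then f (i:ℕ) (j:ℕ) else 0)
      = if 2 ≤ (i:ℕ) ∧ (i:ℕ) ≤ 2*n-2 then f (i:ℕ) ((i:ℕ)+1) else 0 := by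
    intro i
    by_cases hC : 2 ≤ (i:ℕ) ∧ (i:ℕ) ≤ 2*n-2
    · have hj : (i:ℕ)+1 < 2*n+1 := by omega
      rw [Finset.sum_eq_single (⟨(i:ℕ)+1, hj⟩ : Fin (2*n+1))]
      · rw [if_pos ⟨rfl, hC.1, by simpa using (by omega : (i:ℕ)+1 ≤ 2*n-1)⟩, if_pos hC]
      · intro j _ hj'; rw [if_neg]; rintro ⟨h1, -⟩; exact hj' (Fin.ext h1.symm)
      · intro h; exact absurd (Finset.mem_univ _) h
    · rw [if_neg hC]; apply Finset.sum_eq_zero; intro j _; rw [if_neg]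
      rintro ⟨h1, h2, h3⟩; exact hC ⟨h2, by omega⟩
  rw [Finset.sum_congr rfl (fun i _ => inner i),
    Fin.sum_univ_eq_sum_range (fun k => if 2 ≤ k ∧ k ≤ 2*n-2 then f k (k+1) else 0)]
  have e1 : ∀ k : ℕ, (if 2 ≤ k ∧ k ≤ 2*n-2 then f k (k+1) else 0)
      = (if 2 ≤ k then (if k ≤ 2*n-2 then f k (k+1) else 0) else 0) := by
    intro k; by_cases h1 : 2 ≤ k <;> by_cases h2 : k ≤ 2*n-2 <;> simp [h1, h2] <;> omega
  rw [Finset.sum_congr rfl (fun k _ => e1 k),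
    show 2*n+1 = (2*n-1)+2 by omega, sum_ite_shift (fun k => if k ≤ 2*n-2 then f k (k+1) else 0) 2 (2*n-1),
    show 2*n-1 = (2*n-3)+1+1 by omega, sum_range_succ, sum_range_succ,
    if_neg (by omega), if_neg (by omega)]
  rw [Finset.sum_congr rfl (fun k hk => by
    rw [if_pos]; simp only [mem_range] at hk; omega)]
  simp only [add_zero]
open Finset in
lemma B_eval (n : ℕ) (hn : 2 ≤ n) (v : Q n) :
    B n v v = 2 * (∑ k ∈ range (2*n+1), ev n v k ^ 2)
      - 2 * (ev n v 0 * ev n v 2 + ev n v 1 * ev n v 2 + ev n v (2*n-2) * ev n v (2*n)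
        + ∑ k ∈ range (2*n-3), ev n v (k+2) * ev n v (k+3)) := by
  set a := ev n v with ha
  have hcoe : ∀ i : Fin (2*n+1), v i = a (i:ℕ) := fun i => (ev_coe n v i).symm
  rw [B]
  have step1 : ∀ i j : Fin (2*n+1), v i * CM n i j * v j
      = (if i = j then 2*(a ↑i * a ↑j) else 0)
        + (if edge n ↑i ↑j then -(a ↑i * a ↑j) else 0) := by
    intro i j
    rw [CM, hcoe i, hcoe j]
    by_cases h : i = j
    · have hne : ¬ edge n (i:ℕ) (i:ℕ) := by have := i.isLt; unfold edge; omega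
      subst h
      rw [if_pos rfl, if_pos rfl, if_neg hne, add_zero]; ring
    · rw [if_neg h, if_neg h, zero_add]
      by_cases h2 : edge n ↑i ↑j
      · rw [if_pos h2, if_pos h2]; ring
      · rw [if_neg h2, if_neg h2]; ring
  rw [Finset.sum_congr rfl (fun i _ => Finset.sum_congr rfl (fun j _ => step1 i j))]
  have split : (∑ i : Fin (2*n+1), ∑ j : Fin (2*n+1),
        ((if i = j then 2*(a ↑i * a ↑j) else 0) + (if edge n ↑i ↑j then -(a ↑i * a ↑j) else 0)))
      = (∑ i : Fin (2*n+1), ∑ j : Fin (2*n+1), (if i = j then 2*(a ↑i * a ↑j) else 0))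
        + ∑ i : Fin (2*n+1), ∑ j : Fin (2*n+1), (if edge n ↑i ↑j then -(a ↑i * a ↑j) else 0) := by
    rw [← Finset.sum_add_distrib]
    apply Finset.sum_congr rfl; intros; rw [← Finset.sum_add_distrib]
  rw [split]
  have diag : ∀ i : Fin (2*n+1), (∑ j : Fin (2*n+1), if i = j then 2*(a ↑i * a ↑j) else 0)
      = 2 * (a ↑i)^2 := by
    intro i
    rw [Finset.sum_ite_eq]
    simp only [Finset.mem_univ, if_true]; ring
  rw [Finset.sum_congr rfl (fun i _ => diag i),
    Fin.sum_univ_eq_sum_range (fun k => 2 * (a k)^2)]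
  have esplit : ∀ i j : Fin (2*n+1), (if edge n ↑i ↑j then -(a ↑i * a ↑j) else 0)
      = (if (i:ℕ) + 1 = (j:ℕ) ∧ 2 ≤ (i:ℕ) ∧ (j:ℕ) ≤ 2*n-1 then -(a ↑i * a ↑j) else 0)
      + ((if (j:ℕ) + 1 = (i:ℕ) ∧ 2 ≤ (j:ℕ) ∧ (i:ℕ) ≤ 2*n-1 then -(a ↑i * a ↑j) else 0)
      + ((if (i:ℕ) = 0 ∧ (j:ℕ) = 2 then -(a ↑i * a ↑j) else 0)
      + ((if (i:ℕ) = 2 ∧ (j:ℕ) = 0 then -(a ↑i * a ↑j) else 0)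
      + ((if (i:ℕ) = 1 ∧ (j:ℕ) = 2 then -(a ↑i * a ↑j) else 0)
      + ((if (i:ℕ) = 2 ∧ (j:ℕ) = 1 then -(a ↑i * a ↑j) else 0)
      + ((if (i:ℕ) = 2*n-2 ∧ (j:ℕ) = 2*n then -(a ↑i * a ↑j) else 0)
      + (if (i:ℕ) = 2*n ∧ (j:ℕ) = 2*n-2 then -(a ↑i * a ↑j) else 0))))))) :=
    fun i j => edge_split n hn ↑i ↑j (by have := i.isLt; omega) (by have := j.isLt; omega) _
  rw [Finset.sum_congr rfl (fun i _ => Finset.sum_congr rfl (fun j _ => esplit i j))]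
  simp only [Finset.sum_add_distrib]
  rw [double_chain n hn (fun k l => -(a k * a l))]
  rw [Finset.sum_comm (f := fun (i j : Fin (2*n+1)) =>
      (if (j:ℕ) + 1 = (i:ℕ) ∧ 2 ≤ (j:ℕ) ∧ (i:ℕ) ≤ 2*n-1 then -(a ↑i * a ↑j) else 0)),
    double_chain n hn (fun k l => -(a l * a k))]
  rw [double_point n (fun k l => -(a k * a l)) 0 2 (by omega) (by omega),
    double_point n (fun k l => -(a k * a l)) 2 0 (by omega) (by omega),
    double_point n (fun k l => -(a k * a l)) 1 2 (by omega) (by omega),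
    double_point n (fun k l => -(a k * a l)) 2 1 (by omega) (by omega),
    double_point n (fun k l => -(a k * a l)) (2*n-2) (2*n) (by omega) (by omega),
    double_point n (fun k l => -(a k * a l)) (2*n) (2*n-2) (by omega) (by omega)]
  have negY : (∑ k ∈ range (2*n-3), -(a (k+2) * a (k+3)))
      = -∑ k ∈ range (2*n-3), a (k+2) * a (k+3) := by
    rw [← Finset.sum_neg_distrib]
  have negY' : (∑ k ∈ range (2*n-3), -(a (k+3) * a (k+2)))
      = -∑ k ∈ range (2*n-3), a (k+2) * a (k+3) := by
    rw [← Finset.sum_neg_distrib]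
    apply Finset.sum_congr rfl; intros; ring
  rw [negY, negY', ← Finset.mul_sum]
  ring
open Finset in
lemma sum_split (f : ℕ → ℤ) (p q : ℕ) :
    ∑ k ∈ range (p+q), f k = ∑ k ∈ range p, f k + ∑ k ∈ range q, f (p+k) := by
  induction q with
  | zero => simp
  | succ q ih => rw [← Nat.add_assoc, sum_range_succ, ih, sum_range_succ, add_assoc]

open Finset in
lemma decomp5 (n : ℕ) (hn : 2 ≤ n) (f : ℕ → ℤ) :
    ∑ k ∈ range (2*n+1), f k
      = f 0 + f 1 + (∑ k ∈ range (2*n-3), f (k+2)) + f (2*n-1) + f (2*n) := by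
  rw [show 2*n+1 = 2 + ((2*n-3)+2) by omega, sum_split, sum_split,
    Finset.sum_range_succ, Finset.sum_range_succ, Finset.sum_range_succ,
    Finset.sum_range_succ]
  simp only [Finset.range_zero, Finset.sum_empty]
  rw [show 2 + (2*n-3+0) = 2*n-1 by omega, show 2 + (2*n-3+1) = 2*n by omega]
  rw [Finset.sum_congr rfl (fun k _ => by rw [show 2+k = k+2 by omega])]
  ring

open Finset in
lemma B_sos (n : ℕ) (hn : 2 ≤ n) (v : Q n) :
    B n v v = (ev n v 0 - ev n v 1)^2 + (ev n v 0 + ev n v 1 - ev n v 2)^2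
      + (∑ k ∈ range (2*n-4), (ev n v (k+2) - ev n v (k+3))^2)
      + (ev n v (2*n-2) - ev n v (2*n-1) - ev n v (2*n))^2
      + (ev n v (2*n-1) - ev n v (2*n))^2 := by
  rw [B_eval n hn v, decomp5 n hn (fun k => ev n v k ^ 2)]
  set a := ev n v with ha
  set X := ∑ k ∈ range (2*n-3), a (k+2) ^ 2 with hX
  set Y := ∑ k ∈ range (2*n-3), a (k+2) * a (k+3) with hY
  have hM2 : ∑ k ∈ range (2*n-4), a (k+2) ^ 2 = X - a (2*n-2)^2 := by
    rw [hX, show 2*n-3 = (2*n-4)+1 by omega, sum_range_succ,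
      show 2*n-4+2 = 2*n-2 by omega]; ring
  have hM3 : ∑ k ∈ range (2*n-4), a (k+3) ^ 2 = X - a 2 ^ 2 := by
    rw [hX, show 2*n-3 = (2*n-4)+1 by omega, sum_range_succ']
    rw [Finset.sum_congr rfl (fun k (_ : k ∈ range (2*n-4)) => by
      rw [show k+1+2 = k+3 by omega])]
    norm_num
  have hMY : ∑ k ∈ range (2*n-4), a (k+2) * a (k+3) = Y - a (2*n-2) * a (2*n-1) := by
    rw [hY, show 2*n-3 = (2*n-4)+1 by omega, sum_range_succ,
      show 2*n-4+2 = 2*n-2 by omega, show 2*n-4+3 = 2*n-1 by omega]; ring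
  have hmid : ∑ k ∈ range (2*n-4), (a (k+2) - a (k+3))^2
      = (X - a (2*n-2)^2) + (X - a 2^2) - 2*(Y - a (2*n-2) * a (2*n-1)) := by
    rw [← hM2, ← hM3, ← hMY,
      Finset.sum_congr rfl (fun k (_ : k ∈ range (2*n-4)) => show (a (k+2) - a (k+3))^2
        = a (k+2)^2 + a (k+3)^2 - 2*(a (k+2) * a (k+3)) from by ring),
      Finset.sum_sub_distrib, Finset.sum_add_distrib, ← Finset.mul_sum]
  rw [hmid]; ring

open Finset in
lemma B_jump (n : ℕ) (hn : 2 ≤ n) (v : Q n) (h0 : ev n v 0 = 0) :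
    B n v v = (∑ k ∈ range (2*n-2), (ev n v (k+1) - ev n v k)^2)
      + (ev n v (2*n-2) - ev n v (2*n-1) - ev n v (2*n))^2
      + (ev n v (2*n-1) - ev n v (2*n))^2 := by
  rw [B_sos n hn v]
  set a := ev n v with ha
  have hsum : ∑ k ∈ range (2*n-2), (a (k+1) - a k)^2
      = (a 1 - a 0)^2 + (a 2 - a 1)^2 + ∑ k ∈ range (2*n-4), (a (k+3) - a (k+2))^2 := by
    rw [show 2*n-2 = (2*n-3)+1 by omega, sum_range_succ',
      show 2*n-3 = (2*n-4)+1 by omega, sum_range_succ']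
    rw [Finset.sum_congr rfl (fun k (_ : k ∈ range (2*n-4)) => by
      rw [show k+1+1+1 = k+3 by omega, show k+1+1 = k+2 by omega])]
    norm_num; ring
  rw [hsum, h0,
    Finset.sum_congr rfl (fun k (_ : k ∈ range (2*n-4)) => show (a (k+3) - a (k+2))^2
      = (a (k+2) - a (k+3))^2 from by ring)]
  ring
lemma int_le_sq (x : ℤ) : x ≤ x^2 := by
  rcases le_or_gt x 0 with h | h
  · exact le_trans h (sq_nonneg x)
  · nlinarith

lemma int_sq_add_nonneg (x : ℤ) : 0 ≤ x^2 + x := by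
  rcases le_or_gt 0 x with h | h
  · positivity
  · nlinarith

open Finset in
lemma classify (n : ℕ) (hn : 2 ≤ n) (a : ℕ → ℤ)
    (haNN : ∀ k, 0 ≤ a k) (ha0 : a 0 = 0) (h2n : 1 ≤ a (2*n))
    (hJ : (∑ k ∈ range (2*n-2), (a (k+1) - a k)^2)
      + (a (2*n-2) - a (2*n-1) - a (2*n))^2 + (a (2*n-1) - a (2*n))^2 = 2) :
    ∃ i j : ℕ, 1 ≤ i ∧ i < j ∧ j ≤ 2*n ∧
      (∀ k, 1 ≤ k → k ≤ 2*n-2 →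
        a k = (if i ≤ k then 1 else 0) + (if j ≤ k then 1 else 0)) ∧
      (a (2*n-1) = if j ≤ 2*n-1 then 1 else 0) ∧ a (2*n) = 1 := by
  have htel : ∀ m, ∑ k ∈ range m, (a (k+1) - a k) = a m := by
    intro m; rw [Finset.sum_range_sub a m, ha0, sub_zero]
  set S2 := ∑ k ∈ range (2*n-2), (a (k+1) - a k)^2 with hS2
  set u := a (2*n-2) - a (2*n-1) - a (2*n) with hu
  set w := a (2*n-1) - a (2*n) with hw
  have hS : a (2*n-2) ≤ S2 := by
    rw [← htel (2*n-2)]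
    exact Finset.sum_le_sum (fun k _ => int_le_sq _)
  have hp := int_sq_add_nonneg u
  have hq := int_sq_add_nonneg w
  have key : a (2*n-2) = 2 * a (2*n) + u + w := by rw [hu, hw]; ring
  -- a (2n) = 1
  have ht1 : a (2*n) = 1 := by
    have h1 : 2 * a (2*n) + u + w ≤ 2 - u^2 - w^2 := by linarith
    have h2 : a (2*n) ≤ 1 := by linarith
    omega
  have hu0 : u^2 + u = 0 := by linarith
  have hw0 : w^2 + w = 0 := by linarith
  have hu01 : u = 0 ∨ u = -1 := by
    have h : u * (u + 1) = 0 := by linear_combination hu0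
    rcases mul_eq_zero.mp h with h | h
    · left; exact h
    · right; omega
  have hw01 : w = 0 ∨ w = -1 := by
    have h : w * (w + 1) = 0 := by linear_combination hw0
    rcases mul_eq_zero.mp h with h | h
    · left; exact h
    · right; omega
  -- each step is 0 or 1
  have hSeq : ∑ k ∈ range (2*n-2), (a (k+1) - a k) = S2 := by
    rw [htel]; linarith
  have hstep : ∀ k, k < 2*n-2 → a (k+1) - a k = 0 ∨ a (k+1) - a k = 1 := by
    have hz : ∑ k ∈ range (2*n-2), ((a (k+1) - a k)^2 - (a (k+1) - a k)) = 0 := by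
      rw [Finset.sum_sub_distrib, ← hS2, hSeq, sub_self]
    have h2 := (Finset.sum_eq_zero_iff_of_nonneg
      (fun k _ => by have := int_le_sq (a (k+1) - a k); omega)).mp hz
    intro k hk
    have h3 := h2 k (Finset.mem_range.mpr hk)
    have h4 : (a (k+1) - a k) * ((a (k+1) - a k) - 1) = 0 := by linear_combination h3
    rcases mul_eq_zero.mp h4 with h | h
    · left; omega
    · right; omega
  have hmono : ∀ p d, p + d ≤ 2*n-2 → a p ≤ a (p+d) := by
    intro p d
    induction d with
    | zero => intro _; exact le_refl _
    | succ d ih =>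
      intro hpd
      have h1 := ih (by omega)
      have h2 := hstep (p+d) (by omega)
      have h3 : p + (d+1) = (p+d) + 1 := by omega
      rw [h3]
      omega
  have hbound : ∀ k, k ≤ 2*n-2 → a k ≤ a (2*n-2) := by
    intro k hk
    have := hmono k (2*n-2-k) (by omega)
    rwa [show k + (2*n-2-k) = 2*n-2 by omega] at this
  have ha2n1 : a (2*n-1) = 1 + w := by rw [hw]; omega
  rcases hu01 with hu0' | hu0' <;> rcases hw01 with hw0' | hw0'
  · -- u = 0, w = 0 : a(2n-2) = 2
    have hend : a (2*n-2) = 2 := by omega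
    have hex1 : ∃ k, 1 ≤ a k := ⟨2*n-2, by omega⟩
    have hex2 : ∃ k, 2 ≤ a k := ⟨2*n-2, by omega⟩
    set i := Nat.find hex1 with hi
    set j := Nat.find hex2 with hj
    have hi1 : 1 ≤ a i := Nat.find_spec hex1
    have hj2 : 2 ≤ a j := Nat.find_spec hex2
    have hile : i ≤ 2*n-2 := Nat.find_min' hex1 (by omega)
    have hjle : j ≤ 2*n-2 := Nat.find_min' hex2 (by omega)
    have hipos : 1 ≤ i := by
      rcases Nat.eq_zero_or_pos i with h | h
      · rw [h] at hi1; omega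
      · exact h
    have hilt : ∀ k, k < i → a k = 0 := by
      intro k hk
      have h5 := Nat.find_min hex1 hk
      have := haNN k
      omega
    have hai : a i = 1 := by
      have h1 : a (i-1) = 0 := hilt (i-1) (by omega)
      have h2 := hstep (i-1) (by omega)
      have h3 : i - 1 + 1 = i := by omega
      rw [h3] at h2
      omega
    have hij : i < j := by
      have hji : i ≤ j := Nat.find_min' hex1 (by omega)
      rcases Nat.lt_or_ge i j with h | h
      · exact h
      · have h6 : i = j := by omega
        rw [← h6] at hj2; omega
    refine ⟨i, j, hipos, hij, by omega, ?_, ?_, ht1⟩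
    · intro k hk1 hk2
      rcases Nat.lt_or_ge k i with h | h
      · rw [if_neg (by omega), if_neg (by omega), hilt k h]; norm_num
      rcases Nat.lt_or_ge k j with h2 | h2
      · rw [if_pos h, if_neg (by omega)]
        have ha1 : a i ≤ a k := by
          have := hmono i (k-i) (by omega)
          rwa [show i + (k-i) = k by omega] at this
        have ha2 := Nat.find_min hex2 h2
        omega
      · rw [if_pos h, if_pos h2]
        have ha1 : a j ≤ a k := by
          have := hmono j (k-j) (by omega)
          rwa [show j + (k-j) = k by omega] at this
        have := hbound k hk2
        omega
    · rw [if_pos (by omega)]; omega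
  · -- u = 0, w = -1 : a(2n-2) = 1, j = 2n
    have hend : a (2*n-2) = 1 := by omega
    have hex1 : ∃ k, 1 ≤ a k := ⟨2*n-2, by omega⟩
    set i := Nat.find hex1 with hi
    have hi1 : 1 ≤ a i := Nat.find_spec hex1
    have hile : i ≤ 2*n-2 := Nat.find_min' hex1 (by omega)
    have hipos : 1 ≤ i := by
      rcases Nat.eq_zero_or_pos i with h | h
      · rw [h] at hi1; omega
      · exact h
    have hilt : ∀ k, k < i → a k = 0 := by
      intro k hk
      have h5 := Nat.find_min hex1 hk
      have := haNN k
      omega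
    refine ⟨i, 2*n, hipos, by omega, le_refl _, ?_, ?_, ht1⟩
    · intro k hk1 hk2
      rw [if_neg (show ¬ 2*n ≤ k by omega)]
      rcases Nat.lt_or_ge k i with h | h
      · rw [if_neg (by omega), hilt k h]; norm_num
      · rw [if_pos h]
        have ha1 : a i ≤ a k := by
          have := hmono i (k-i) (by omega)
          rwa [show i + (k-i) = k by omega] at this
        have := hbound k hk2
        omega
    · rw [if_neg (by omega)]; omega
  · -- u = -1, w = 0 : a(2n-2) = 1, j = 2n-1
    have hend : a (2*n-2) = 1 := by omega
    have hex1 : ∃ k, 1 ≤ a k := ⟨2*n-2, by omega⟩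
    set i := Nat.find hex1 with hi
    have hi1 : 1 ≤ a i := Nat.find_spec hex1
    have hile : i ≤ 2*n-2 := Nat.find_min' hex1 (by omega)
    have hipos : 1 ≤ i := by
      rcases Nat.eq_zero_or_pos i with h | h
      · rw [h] at hi1; omega
      · exact h
    have hilt : ∀ k, k < i → a k = 0 := by
      intro k hk
      have h5 := Nat.find_min hex1 hk
      have := haNN k
      omega
    refine ⟨i, 2*n-1, hipos, by omega, by omega, ?_, ?_, ht1⟩
    · intro k hk1 hk2
      rw [if_neg (show ¬ 2*n-1 ≤ k by omega)]
      rcases Nat.lt_or_ge k i with h | h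
      · rw [if_neg (by omega), hilt k h]; norm_num
      · rw [if_pos h]
        have ha1 : a i ≤ a k := by
          have := hmono i (k-i) (by omega)
          rwa [show i + (k-i) = k by omega] at this
        have := hbound k hk2
        omega
    · rw [if_pos (le_refl _)]; omega
  · -- u = -1, w = -1 : a(2n-2) = 0
    have hend : a (2*n-2) = 0 := by omega
    refine ⟨2*n-1, 2*n, by omega, by omega, le_refl _, ?_, ?_, ht1⟩
    · intro k hk1 hk2
      rw [if_neg (show ¬ 2*n-1 ≤ k by omega), if_neg (show ¬ 2*n ≤ k by omega)]
      have := hbound k hk2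
      have := haNN k
      omega
    · rw [if_neg (by omega)]; omega
open Finset in
lemma no_anti (n : ℕ) (hn : 2 ≤ n) (a : ℕ → ℤ) (ha0 : a 0 = 0)
    (hanti : ∀ k, k ≤ 2*n → a (2*n - k) = - a k)
    (hJ : (∑ k ∈ range (2*n-2), (a (k+1) - a k)^2)
      + (a (2*n-2) - a (2*n-1) - a (2*n))^2 + (a (2*n-1) - a (2*n))^2 = 2) : False := by
  have ha2n : a (2*n) = 0 := by
    have h := hanti 0 (by omega)
    rw [Nat.sub_zero, ha0] at h
    omega
  have han : a n = 0 := by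
    have h := hanti n (by omega)
    rw [show 2*n - n = n by omega] at h
    omega
  -- all-zero gives contradiction
  have hzero_all : (∀ k, k ≤ 2*n → a k = 0) → False := by
    intro hz
    rw [Finset.sum_eq_zero (fun k hk => by
      have hk' := Finset.mem_range.mp hk
      rw [hz (k+1) (by omega), hz k (by omega)]; ring)] at hJ
    rw [hz (2*n-2) (by omega), hz (2*n-1) (by omega), hz (2*n) (by omega)] at hJ
    norm_num at hJ
  -- split the chain sum at n
  have hsplit : ∑ k ∈ range (2*n-2), (a (k+1) - a k)^2
      = (∑ k ∈ range n, (a (k+1) - a k)^2)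
        + ∑ k ∈ range (n-2), (a (n+k+1) - a (n+k))^2 := by
    rw [show 2*n-2 = n + (n-2) by omega, sum_split]
  set F := ∑ k ∈ range n, (a (k+1) - a k)^2 with hF
  set G0 := ∑ k ∈ range (n-2), (a (n+k+1) - a (n+k))^2 with hG0
  have hFnn : 0 ≤ F := Finset.sum_nonneg (fun k _ => sq_nonneg _)
  have hG0nn : 0 ≤ G0 := Finset.sum_nonneg (fun k _ => sq_nonneg _)
  have evensub : ∀ (m : ℕ) (f : ℕ → ℤ),
      Even ((∑ k ∈ range m, (f (k+1) - f k)^2) - (f m - f 0)) := by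
    intro m f
    rw [← Finset.sum_range_sub f m, ← Finset.sum_sub_distrib]
    apply Finset.even_sum
    intro k _
    have h : (f (k+1) - f k)^2 - (f (k+1) - f k)
        = ((f (k+1) - f k) - 1) * (((f (k+1) - f k) - 1) + 1) := by ring
    rw [h]
    exact Int.even_mul_succ_self _
  -- parity of F
  have hFeven : Even F := by
    have h := evensub n a
    rw [han, ha0, sub_zero, sub_zero] at h
    exact h
  -- parity of G
  have hGeven : Even (G0 + (a (2*n-2) - a (2*n-1) - a (2*n))^2 + (a (2*n-1) - a (2*n))^2) := by
    have h := evensub (n-2) (fun k => a (n+k))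
    rw [show n + (n-2) = 2*n-2 by omega, show n + 0 = n by omega, han, sub_zero] at h
    have h2 : G0 = ∑ k ∈ range (n-2), ((fun k => a (n+k)) (k+1) - (fun k => a (n+k)) k)^2 := by
      rw [hG0]
      apply Finset.sum_congr rfl
      intro k _
      simp only
      rw [show n + (k+1) = n+k+1 by omega]
    rw [← h2] at h
    obtain ⟨c, hc⟩ := h
    have hu2 : Even ((a (2*n-2) - a (2*n-1) - a (2*n))^2 - (a (2*n-2) - a (2*n-1) - a (2*n))) := by
      have hh : (a (2*n-2) - a (2*n-1) - a (2*n))^2 - (a (2*n-2) - a (2*n-1) - a (2*n))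
          = ((a (2*n-2) - a (2*n-1) - a (2*n)) - 1) * (((a (2*n-2) - a (2*n-1) - a (2*n)) - 1) + 1) := by
        ring
      rw [hh]; exact Int.even_mul_succ_self _
    have hw2 : Even ((a (2*n-1) - a (2*n))^2 - (a (2*n-1) - a (2*n))) := by
      have hh : (a (2*n-1) - a (2*n))^2 - (a (2*n-1) - a (2*n))
          = ((a (2*n-1) - a (2*n)) - 1) * (((a (2*n-1) - a (2*n)) - 1) + 1) := by ring
      rw [hh]; exact Int.even_mul_succ_self _
    obtain ⟨c1, hc1⟩ := hu2
    obtain ⟨c2, hc2⟩ := hw2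
    exact ⟨c + c1 + c2 + (a (2*n-2) - a (2*n)), by linarith⟩
  rw [hsplit] at hJ
  set G := G0 + (a (2*n-2) - a (2*n-1) - a (2*n))^2 + (a (2*n-1) - a (2*n))^2 with hG
  have hJ' : F + G = 2 := by rw [hG]; linarith
  have hGnn : 0 ≤ G := by
    have := sq_nonneg (a (2*n-2) - a (2*n-1) - a (2*n))
    have := sq_nonneg (a (2*n-1) - a (2*n))
    rw [hG]; linarith
  obtain ⟨cf, hcf⟩ := hFeven
  obtain ⟨cg, hcg⟩ := hGeven
  have hFG : F = 0 ∨ G = 0 := by omega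
  rcases hFG with hF0 | hG0'
  · -- F = 0 : a vanishes on [0, n], hence everywhere
    have hterm := (Finset.sum_eq_zero_iff_of_nonneg
      (fun k (_ : k ∈ range n) => sq_nonneg (a (k+1) - a k))).mp hF0
    have hlow : ∀ k, k ≤ n → a k = 0 := by
      intro k
      induction k with
      | zero => intro _; exact ha0
      | succ k ih =>
        intro hk
        have h1 := hterm k (Finset.mem_range.mpr (by omega))
        have h2 : a (k+1) = a k := by
          have := sq_eq_zero_iff.mp h1; omega
        rw [h2]; exact ih (by omega)
    apply hzero_all
    intro k hk
    rcases le_or_gt k n with h | h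
    · exact hlow k h
    · have h1 := hanti (2*n - k) (by omega)
      rw [show 2*n - (2*n - k) = k by omega] at h1
      have h2 := hlow (2*n - k) (by omega)
      omega
  · -- G = 0 : a vanishes on [n, 2n], hence everywhere
    have hu0 : (a (2*n-2) - a (2*n-1) - a (2*n))^2 = 0 := by
      have := sq_nonneg (a (2*n-2) - a (2*n-1) - a (2*n))
      have := sq_nonneg (a (2*n-1) - a (2*n))
      rw [hG] at hG0'; linarith
    have hw0 : (a (2*n-1) - a (2*n))^2 = 0 := by
      have := sq_nonneg (a (2*n-2) - a (2*n-1) - a (2*n))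
      have := sq_nonneg (a (2*n-1) - a (2*n))
      linarith
    have hG00 : G0 = 0 := by
      rw [hG] at hG0'; linarith [sq_nonneg (a (2*n-2) - a (2*n-1) - a (2*n)),
        sq_nonneg (a (2*n-1) - a (2*n))]
    have hterm := (Finset.sum_eq_zero_iff_of_nonneg
      (fun k (_ : k ∈ range (n-2)) => sq_nonneg (a (n+k+1) - a (n+k)))).mp hG00
    have hmid : ∀ d, d ≤ n-2 → a (n+d) = 0 := by
      intro d
      induction d with
      | zero => intro _; rw [show n + 0 = n by omega]; exact han
      | succ d ih =>
        intro hd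
        have h1 := hterm d (Finset.mem_range.mpr (by omega))
        have h2 : a (n+d+1) = a (n+d) := by
          have := sq_eq_zero_iff.mp h1; omega
        rw [show n + (d+1) = n+d+1 by omega, h2]
        exact ih (by omega)
    have ha2n1 : a (2*n-1) = 0 := by
      have := sq_eq_zero_iff.mp hw0
      omega
    have hup : ∀ m, n ≤ m → m ≤ 2*n → a m = 0 := by
      intro m h1 h2
      rcases le_or_gt m (2*n-2) with h | h
      · have := hmid (m - n) (by omega)
        rwa [show n + (m - n) = m by omega] at this
      · rcases Nat.lt_or_ge m (2*n) with h' | h'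
        · rw [show m = 2*n-1 by omega]; exact ha2n1
        · rw [show m = 2*n by omega]; exact ha2n
    apply hzero_all
    intro k hk
    rcases le_or_gt k n with h | h
    · have h1 := hanti k (by omega)
      have h2 := hup (2*n - k) (by omega) (by omega)
      omega
    · exact hup k (by omega) hk
/-- Interval vector `±(e_min - e_max)` used as the root `β` in case (c). -/
def ivec (n i j : ℕ) : Q n := fun k =>
  if i ≤ (k:ℕ) ∧ (k:ℕ) ≤ 2*n - j then 1
  else if 2*n+1-j ≤ (k:ℕ) ∧ (k:ℕ) ≤ i-1 then -1 else 0

lemma ivec_ev (n i j : ℕ) (hi : 1 ≤ i) (hi2 : i ≤ 2*n-1) (hj : j ≤ 2*n) (k : ℕ) :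
    ev n (ivec n i j) k
      = if i ≤ k ∧ k ≤ 2*n - j then 1
        else if 2*n+1-j ≤ k ∧ k ≤ i-1 then -1 else 0 := by
  rw [ev]
  split
  · rfl
  · rename_i h
    rw [if_neg (by omega), if_neg (by omega)]

lemma σ_ev (n : ℕ) (v : Q n) (k : Fin (2*n+1)) :
    σmap n v k = ev n v (2*n - (k:ℕ)) :=
  (ev_apply n v _ (by omega)).symm

open Finset in
lemma sum_indicator (m c : ℕ) :
    ∑ k ∈ range m, (if k + 2 = c then (1:ℤ) else 0)
      = if 2 ≤ c ∧ c ≤ m + 1 then 1 else 0 := by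
  induction m with
  | zero => rw [Finset.range_zero, Finset.sum_empty, if_neg (by omega)]
  | succ m ih =>
    rw [Finset.sum_range_succ, ih]
    by_cases hc : m + 2 = c
    · rw [if_pos hc, if_neg (by omega), if_pos (by omega)]; ring
    · rw [if_neg hc, add_zero, if_congr (show (2 ≤ c ∧ c ≤ m+1) ↔ (2 ≤ c ∧ c ≤ m+1+1) by omega) rfl rfl]

lemma ind_key (n : ℕ) (hn : 2 ≤ n) (c : ℕ) (hc : c ≤ 2*n-1) :
    (if 0 = c then (1:ℤ) else 0) + (if 1 = c then 1 else 0)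
      + (if 2 ≤ c ∧ c ≤ 2*n-3 then 1 else 0)
      + (if 2*n-2 = c then 1 else 0) + (if 2*n-1 = c then 1 else 0) = 1 := by
  split_ifs <;> omega

open Finset in
lemma sos_interval (n : ℕ) (hn : 2 ≤ n) (b : ℕ → ℤ) (A B' : ℕ) (ε : ℤ)
    (hε : ε = 1 ∨ ε = -1) (hA : 1 ≤ A) (hAB : A ≤ B') (hB2 : B' ≤ 2*n-1)
    (hval : ∀ k, b k = if A ≤ k ∧ k ≤ B' then ε else 0) :
    (b 0 - b 1)^2 + (b 0 + b 1 - b 2)^2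
      + (∑ k ∈ range (2*n-4), (b (k+2) - b (k+3))^2)
      + (b (2*n-2) - b (2*n-1) - b (2*n))^2 + (b (2*n-1) - b (2*n))^2 = 2 := by
  have hsq : ∀ k, (b k - b (k+1))^2
      = (if k = A-1 then 1 else 0) + (if k = B' then 1 else 0) := by
    intro k
    rw [hval k, hval (k+1)]
    rcases hε with h | h <;> subst h <;> split_ifs <;> first | omega | norm_num
  have hb0 : b 0 = 0 := by rw [hval, if_neg (by omega)]
  have hb2n : b (2*n) = 0 := by rw [hval, if_neg (by omega)]
  have e1 : (b 0 - b 1)^2 = (if 0 = A-1 then 1 else 0) + (if 0 = B' then (1:ℤ) else 0) := by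
    rw [← hsq 0]
  have e2 : (b 0 + b 1 - b 2)^2 = (if 1 = A-1 then 1 else 0) + (if 1 = B' then (1:ℤ) else 0) := by
    rw [← hsq 1, hb0, zero_add]
  have e4 : (b (2*n-2) - b (2*n-1) - b (2*n))^2
      = (if 2*n-2 = A-1 then 1 else 0) + (if 2*n-2 = B' then (1:ℤ) else 0) := by
    rw [← hsq (2*n-2), hb2n, show 2*n-2+1 = 2*n-1 by omega]; ring_nf
  have e5 : (b (2*n-1) - b (2*n))^2
      = (if 2*n-1 = A-1 then 1 else 0) + (if 2*n-1 = B' then (1:ℤ) else 0) := by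
    rw [← hsq (2*n-1), show 2*n-1+1 = 2*n by omega]
  have emid : (∑ k ∈ range (2*n-4), (b (k+2) - b (k+3))^2)
      = (if 2 ≤ A-1 ∧ A-1 ≤ 2*n-3 then 1 else 0)
        + (if 2 ≤ B' ∧ B' ≤ 2*n-3 then (1:ℤ) else 0) := by
    rw [Finset.sum_congr rfl (fun k (_ : k ∈ range (2*n-4)) => by
      rw [show k+3 = (k+2)+1 by omega, hsq (k+2)])]
    rw [Finset.sum_add_distrib]
    have i1 : ∀ c : ℕ, (∑ k ∈ range (2*n-4), if k+2 = c then (1:ℤ) else 0)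
        = if 2 ≤ c ∧ c ≤ 2*n-3 then 1 else 0 := by
      intro c
      rw [Finset.sum_congr rfl (fun k _ => by
        rw [if_congr (show (k+2 = c) ↔ (k + 2 = c) from Iff.rfl) rfl rfl]),
        sum_indicator (2*n-4) c,
        if_congr (show (2 ≤ c ∧ c ≤ 2*n-4+1) ↔ (2 ≤ c ∧ c ≤ 2*n-3) by omega) rfl rfl]
    rw [i1 (A-1), i1 B']
  rw [e1, e2, e4, e5, emid]
  have k1 := ind_key n hn (A-1) (by omega)
  have k2 := ind_key n hn B' (by omega)
  linarith
lemma apply_zero (n : ℕ) (v : Q n) : v 0 = ev n v 0 := by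
  rw [← ev_coe n v 0, Fin.val_zero]

lemma apply_last (n : ℕ) (v : Q n) : v ⟨2*n, by omega⟩ = ev n v (2*n) :=
  (ev_apply n v (2*n) (by omega)).symm

set_option maxHeartbeats 4000000 in
theorem statement5 (n : ℕ) (hn : 2 ≤ n) : ∀ α ∈ Δ0Pos n,
    ((α ∈ Δ0'Pos n) ∨
      (∃ m : ℤ, 0 < m ∧ α + σmap n α = m • δ n) ∨
      (∃ β ∈ Δ0' n, σmap n β ≠ β ∧ α + σmap n α = δ n + β + σmap n β)) ∧
    ¬((α ∈ Δ0'Pos n) ∧ (∃ m : ℤ, 0 < m ∧ α + σmap n α = m • δ n)) ∧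
    ¬((α ∈ Δ0'Pos n) ∧
      (∃ β ∈ Δ0' n, σmap n β ≠ β ∧ α + σmap n α = δ n + β + σmap n β)) ∧
    ¬((∃ m : ℤ, 0 < m ∧ α + σmap n α = m • δ n) ∧
      (∃ β ∈ Δ0' n, σmap n β ≠ β ∧ α + σmap n α = δ n + β + σmap n β)) := by
  intro α hα
  obtain ⟨⟨hpos, hB⟩, h0⟩ := hα
  have ha0 : ev n α 0 = 0 := by rw [← apply_zero n α]; exact h0
  have haNN : ∀ k, 0 ≤ ev n α k := by
    intro k; rw [ev]; split
    · exact hpos _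
    · exact le_refl 0
  have hadd : ∀ k : Fin (2*n+1), (α + σmap n α) k
      = ev n α (k:ℕ) + ev n α (2*n - (k:ℕ)) := by
    intro k; rw [Pi.add_apply, ev_coe, σ_ev]
  have hδ : ∀ k : Fin (2*n+1), δ n k
      = if (k:ℕ) = 0 ∨ (k:ℕ) = 1 ∨ (k:ℕ) = 2*n-1 ∨ (k:ℕ) = 2*n then 1 else 2 :=
    fun k => rfl
  have hδ0 : δ n 0 = 1 := by
    rw [hδ 0, if_pos (Or.inl (Fin.val_zero _))]
  refine ⟨?_, ?_, ?_, ?_⟩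
  · -- existence of one of the three cases
    rcases eq_or_ne (ev n α (2*n)) 0 with hz | hnz
    · left
      exact ⟨⟨hB, h0, by rw [apply_last n α]; exact hz⟩, hpos⟩
    · have h1 : 1 ≤ ev n α (2*n) := by have := haNN (2*n); omega
      have hJ := (B_jump n hn α ha0).symm.trans hB
      obtain ⟨i, j, hi1, hij, hj2n, hpat, hp1, hp2⟩ := classify n hn (ev n α) haNN ha0 h1 hJ
      have hi2 : i ≤ 2*n-1 := by omega
      have hval : ∀ m, m ≤ 2*n →
          ((m = 0 ∧ ev n α m = 0)
          ∨ (1 ≤ m ∧ m ≤ 2*n-2 ∧ ((m < i ∧ ev n α m = 0)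
              ∨ (i ≤ m ∧ m < j ∧ ev n α m = 1) ∨ (j ≤ m ∧ ev n α m = 2)))
          ∨ (m = 2*n-1 ∧ ((j ≤ 2*n-1 ∧ ev n α m = 1) ∨ (j = 2*n ∧ ev n α m = 0)))
          ∨ (m = 2*n ∧ ev n α m = 1)) := by
        intro m hm
        by_cases hm0 : m = 0
        · exact Or.inl ⟨hm0, by rw [hm0]; exact ha0⟩
        by_cases hm2n : m = 2*n
        · exact Or.inr (Or.inr (Or.inr ⟨hm2n, by rw [hm2n]; exact hp2⟩))
        by_cases hm2n1 : m = 2*n-1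
        · refine Or.inr (Or.inr (Or.inl ⟨hm2n1, ?_⟩))
          rw [hm2n1]
          split_ifs at hp1 with h
          · exact Or.inl ⟨h, hp1⟩
          · exact Or.inr ⟨by omega, hp1⟩
        · refine Or.inr (Or.inl ⟨by omega, by omega, ?_⟩)
          have h := hpat m (by omega) (by omega)
          split_ifs at h with h1 h2 h3
          · exact Or.inr (Or.inr ⟨by omega, by omega⟩)
          · exact Or.inr (Or.inl ⟨by omega, by omega, by omega⟩)
          · exact Or.inr (Or.inr ⟨by omega, by omega⟩)
          · exact Or.inl ⟨by omega, by omega⟩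
      by_cases hbc : i + j = 2*n+1
      · right; left
        refine ⟨1, one_pos, ?_⟩
        funext k
        have hK := k.isLt
        have e1 := hval (k:ℕ) (by omega)
        have e2 := hval (2*n - (k:ℕ)) (by omega)
        rw [hadd k, Pi.smul_apply, smul_eq_mul, one_mul, hδ k]
        split_ifs <;> omega
      · right; right
        rcases Nat.lt_or_ge (i+j) (2*n+1) with hlt | hge
        · -- i + j ≤ 2n : positive interval [i, 2n-j]
          have hεval : ∀ m, ev n (ivec n i j) m
              = if i ≤ m ∧ m ≤ 2*n - j then 1 else 0 := by
            intro m
            rw [ivec_ev n i j hi1 hi2 (by omega) m]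
            split_ifs <;> omega
          refine ⟨ivec n i j, ⟨?_, ?_, ?_⟩, ?_, ?_⟩
          · rw [B_sos n hn (ivec n i j)]
            exact sos_interval n hn (ev n (ivec n i j)) i (2*n - j) 1 (Or.inl rfl)
              hi1 (by omega) (by omega) hεval
          · rw [apply_zero n (ivec n i j), hεval 0, if_neg (by omega)]
          · rw [apply_last n (ivec n i j), hεval (2*n), if_neg (by omega)]
          · intro hcontra
            have h := congrFun hcontra ⟨i, by omega⟩
            rw [σ_ev n (ivec n i j) ⟨i, by omega⟩] at h
            rw [show ((⟨i, by omega⟩ : Fin (2*n+1)) : ℕ) = i from rfl] at h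
            rw [hεval (2*n - i), if_neg (by omega),
              ← ev_apply n (ivec n i j) i (by omega), hεval i,
              if_pos ⟨le_refl i, by omega⟩] at h
            exact absurd h (by norm_num)
          · funext k
            have hK := k.isLt
            have e1 := hval (k:ℕ) (by omega)
            have e2 := hval (2*n - (k:ℕ)) (by omega)
            rw [hadd k, Pi.add_apply, Pi.add_apply, hδ k,
              σ_ev n (ivec n i j) k, hεval (2*n - (k:ℕ)),
              ← ev_coe n (ivec n i j) k, hεval (k:ℕ)]
            split_ifs <;> omega
        · -- i + j ≥ 2n+2 : negative interval [2n+1-j, i-1]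
          have hge2 : 2*n+2 ≤ i+j := by omega
          have hεval : ∀ m, ev n (ivec n i j) m
              = if 2*n+1-j ≤ m ∧ m ≤ i-1 then -1 else 0 := by
            intro m
            rw [ivec_ev n i j hi1 hi2 (by omega) m]
            split_ifs <;> omega
          refine ⟨ivec n i j, ⟨?_, ?_, ?_⟩, ?_, ?_⟩
          · rw [B_sos n hn (ivec n i j)]
            exact sos_interval n hn (ev n (ivec n i j)) (2*n+1-j) (i-1) (-1) (Or.inr rfl)
              (by omega) (by omega) (by omega) hεval
          · rw [apply_zero n (ivec n i j), hεval 0, if_neg (by omega)]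
          · rw [apply_last n (ivec n i j), hεval (2*n), if_neg (by omega)]
          · intro hcontra
            have h := congrFun hcontra ⟨2*n+1-j, by omega⟩
            rw [σ_ev n (ivec n i j) ⟨2*n+1-j, by omega⟩] at h
            rw [show ((⟨2*n+1-j, by omega⟩ : Fin (2*n+1)) : ℕ) = 2*n+1-j from rfl] at h
            rw [hεval (2*n - (2*n+1-j)), if_neg (by omega),
              ← ev_apply n (ivec n i j) (2*n+1-j) (by omega), hεval (2*n+1-j),
              if_pos ⟨le_refl _, by omega⟩] at h
            exact absurd h (by norm_num)
          · funext k
            have hK := k.isLt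
            have e1 := hval (k:ℕ) (by omega)
            have e2 := hval (2*n - (k:ℕ)) (by omega)
            rw [hadd k, Pi.add_apply, Pi.add_apply, hδ k,
              σ_ev n (ivec n i j) k, hεval (2*n - (k:ℕ)),
              ← ev_coe n (ivec n i j) k, hεval (k:ℕ)]
            split_ifs <;> omega
  · -- (a) and (b) are incompatible
    rintro ⟨⟨⟨hB', h0', hlast⟩, hpos'⟩, m, hm, heq⟩
    have h := congrFun heq 0
    rw [Pi.add_apply, Pi.smul_apply, smul_eq_mul, σ_ev n α 0, Fin.val_zero,
      Nat.sub_zero, hδ0, h0'] at h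
    rw [apply_last n α] at hlast
    rw [hlast] at h
    omega
  · -- (a) and (c) are incompatible
    rintro ⟨⟨⟨hB', h0', hlast⟩, hpos'⟩, β, ⟨hBβ, hβ0, hβlast⟩, hσ, heq⟩
    have h := congrFun heq 0
    rw [Pi.add_apply, Pi.add_apply, Pi.add_apply, σ_ev n α 0, σ_ev n β 0, Fin.val_zero,
      Nat.sub_zero, hδ0, h0', hβ0] at h
    rw [apply_last n α] at hlast
    rw [apply_last n β] at hβlast
    rw [hlast, hβlast] at h
    omega
  · -- (b) and (c) are incompatible
    rintro ⟨⟨m, hm, heqb⟩, β, ⟨hBβ, hβ0, hβlast⟩, hσ, heqc⟩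
    have hb0 := congrFun heqb 0
    have hc0 := congrFun heqc 0
    rw [Pi.add_apply, Pi.smul_apply, smul_eq_mul, σ_ev n α 0, Fin.val_zero,
      Nat.sub_zero, hδ0, h0] at hb0
    rw [Pi.add_apply, Pi.add_apply, Pi.add_apply, σ_ev n α 0, σ_ev n β 0, Fin.val_zero,
      Nat.sub_zero, hδ0, h0, hβ0] at hc0
    rw [apply_last n β] at hβlast
    rw [hβlast] at hc0
    have hm1 : m = 1 := by omega
    subst hm1
    have hfun : ∀ k : Fin (2*n+1), β k + σmap n β k = 0 := by
      intro k
      have h1 := congrFun heqb k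
      have h2 := congrFun heqc k
      rw [Pi.add_apply, Pi.smul_apply, smul_eq_mul, one_mul] at h1
      rw [Pi.add_apply, Pi.add_apply, Pi.add_apply] at h2
      linarith
    have hβ0' : ev n β 0 = 0 := by rw [← apply_zero n β]; exact hβ0
    have hanti : ∀ k, k ≤ 2*n → ev n β (2*n - k) = - ev n β k := by
      intro k hk
      have h := hfun ⟨k, by omega⟩
      rw [σ_ev n β ⟨k, by omega⟩,
        show ((⟨k, by omega⟩ : Fin (2*n+1)) : ℕ) = k from rfl,
        ← ev_apply n β k (by omega)] at h
      linarith
    exact no_anti n hn (ev n β) hβ0' hanti ((B_jump n hn β hβ0').symm.trans hBβ)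

end Stmt5
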